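/- Let $1 \le q < s$, $1 \le r \le s$, $U, X$ Banach spaces and $u \in \mathcal{L}(U;X)$. If $(x_j)$ is anisotropic $(s,q,r)$-summable in $U$, then $(u(x_j))$ is anisotropic $(s,q,r)$-summable in $X$, and the induced operator $\widehat{u}: \ell^A_{(s,q,r)}(U) \to \ell^A_{(s,q,r)}(X)$ satisfies $\|\widehat{u}\| = \|u\|$. -/

import Mathlib

open scoped BigOperators NNReal ENNReal

noncomputable section

/-- `(xs k)` belongs to `ℓ_r(X*)`. -/
def MemLr (r : ℝ) {X : Type*} [NormedAddCommGroup X] [NormedSpace ℝ X]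
    (xs : ℕ → X →L[ℝ] ℝ) : Prop :=
  Summable fun k => ‖xs k‖ ^ r

/-- The `ℓ_r(X*)` norm. -/
noncomputable def lrNorm (r : ℝ) {X : Type*} [NormedAddCommGroup X] [NormedSpace ℝ X]
    (xs : ℕ → X →L[ℝ] ℝ) : ℝ :=
  (∑' k, ‖xs k‖ ^ r) ^ (1 / r)

/-- Weakly `q`-summable sequences. -/
def WeaklySummable (q : ℝ) {X : Type*} [NormedAddCommGroup X] [NormedSpace ℝ X]
    (x : ℕ → X) : Prop :=
  ∀ f : X →L[ℝ] ℝ, Summable fun j => |f (x j)| ^ q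

/-- The weak `ℓ_q` norm. -/
noncomputable def weakNorm (q : ℝ) {X : Type*} [NormedAddCommGroup X] [NormedSpace ℝ X]
    (x : ℕ → X) : ℝ :=
  ⨆ f : {f : X →L[ℝ] ℝ // ‖f‖ ≤ 1}, (∑' j, |f.1 (x j)| ^ q) ^ (1 / q)

/-- Anisotropic `(s,q,r)`-summable sequences. -/
def AnisoSummable (s q r : ℝ) {X : Type*} [NormedAddCommGroup X] [NormedSpace ℝ X]
    (x : ℕ → X) : Prop :=
  ∀ xs : ℕ → X →L[ℝ] ℝ, MemLr r xs →
    (∀ j, Summable fun k => |xs k (x j)| ^ s) ∧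
      Summable fun j => (∑' k, |xs k (x j)| ^ s) ^ (q / s)

/-- The anisotropic `(s,q,r)` norm. -/
noncomputable def anisoNorm (s q r : ℝ) {X : Type*} [NormedAddCommGroup X] [NormedSpace ℝ X]
    (x : ℕ → X) : ℝ :=
  ⨆ xs : {xs : ℕ → X →L[ℝ] ℝ // MemLr r xs ∧ lrNorm r xs ≤ 1},
    (∑' j, (∑' k, |xs.1 k (x j)| ^ s) ^ (q / s)) ^ (1 / q)
namespace AnisoAux

variable {s q r : ℝ} {X : Type*} [NormedAddCommGroup X] [NormedSpace ℝ X]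

lemma rpow_s_le_rpow_r {t : ℝ} (ht : 0 ≤ t) (ht1 : t ≤ 1) (h0 : 0 < r) (hrs : r ≤ s) :
    t ^ s ≤ t ^ r := by
  rcases eq_or_lt_of_le ht with h | h
  · have hs0 : 0 < s := h0.trans_le hrs
    rw [← h, Real.zero_rpow hs0.ne', Real.zero_rpow h0.ne']
  · exact Real.rpow_le_rpow_of_exponent_ge h ht1 hrs

lemma summable_rpow_s (h0 : 0 < r) (hrs : r ≤ s) {t : ℕ → ℝ} (ht : ∀ k, 0 ≤ t k)
    (h : Summable fun k => t k ^ r) : Summable fun k => t k ^ s := by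
  set T := (∑' k, t k ^ r) with hT
  have hbound : ∀ k, t k ^ s ≤ (1 + T ^ (1/r)) ^ (s - r) * t k ^ r := by
    intro k
    rcases eq_or_lt_of_le (ht k) with h' | h'
    · have hs0 : 0 < s := h0.trans_le hrs
      rw [← h', Real.zero_rpow hs0.ne', Real.zero_rpow h0.ne', mul_zero]
    · have htk : t k ^ r ≤ T := Summable.le_tsum h k fun i _ => Real.rpow_nonneg (ht i) r
      have htk2 : t k ≤ T ^ (1/r) := by
        have h2 := Real.rpow_le_rpow (Real.rpow_nonneg (ht k) r) htk
          (by positivity : (0:ℝ) ≤ 1/r)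
        rwa [← Real.rpow_mul (ht k), mul_one_div, div_self h0.ne', Real.rpow_one] at h2
      have h3 : t k ^ s = t k ^ (s - r) * t k ^ r := by
        rw [← Real.rpow_add h', sub_add_cancel]
      rw [h3]
      have h4 : t k ^ (s - r) ≤ (1 + T ^ (1/r)) ^ (s - r) :=
        Real.rpow_le_rpow (ht k) (htk2.trans (le_add_of_nonneg_left zero_le_one))
          (sub_nonneg.2 hrs)
      exact mul_le_mul_of_nonneg_right h4 (Real.rpow_nonneg (ht k) r)
  exact Summable.of_nonneg_of_le (fun k => Real.rpow_nonneg (ht k) s) hbound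
    (h.mul_left _)

lemma memLr_summable_s (h0 : 0 < r) (hrs : r ≤ s) {xs : ℕ → X →L[ℝ] ℝ}
    (h : MemLr r xs) : Summable fun k => ‖xs k‖ ^ s :=
  summable_rpow_s h0 hrs (fun k => norm_nonneg _) h

lemma tsum_r_le_one (h0 : 0 < r) {xs : ℕ → X →L[ℝ] ℝ} (h : MemLr r xs)
    (h1 : lrNorm r xs ≤ 1) : ∑' k, ‖xs k‖ ^ r ≤ 1 := by
  by_contra h2
  push_neg at h2
  have : (1:ℝ) < (∑' k, ‖xs k‖ ^ r) ^ (1/r) := by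
    rw [Real.one_lt_rpow_iff_of_pos (lt_trans one_pos h2)]
    exact Or.inl ⟨h2, by positivity⟩
  exact absurd h1 (not_le.2 this)

lemma norm_le_one (h0 : 0 < r) {xs : ℕ → X →L[ℝ] ℝ} (h : MemLr r xs)
    (h1 : lrNorm r xs ≤ 1) (k : ℕ) : ‖xs k‖ ≤ 1 := by
  have hk : ‖xs k‖ ^ r ≤ 1 :=
    (Summable.le_tsum h k fun i _ => Real.rpow_nonneg (norm_nonneg _) r).trans
      (tsum_r_le_one h0 h h1)
  by_contra h2
  push_neg at h2
  have : (1:ℝ) < ‖xs k‖ ^ r := by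
    rw [Real.one_lt_rpow_iff_of_pos (lt_trans one_pos h2)]
    exact Or.inl ⟨h2, h0⟩
  exact absurd hk (not_le.2 this)

lemma tsum_s_le_one (h0 : 0 < r) (hrs : r ≤ s) {xs : ℕ → X →L[ℝ] ℝ} (h : MemLr r xs)
    (h1 : lrNorm r xs ≤ 1) : ∑' k, ‖xs k‖ ^ s ≤ 1 :=
  le_trans (Summable.tsum_le_tsum
      (fun k => rpow_s_le_rpow_r (norm_nonneg _) (norm_le_one h0 h h1 k) h0 hrs)
      (memLr_summable_s h0 hrs h) h)
    (tsum_r_le_one h0 h h1)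

lemma memLr_zero (h0 : 0 < r) : MemLr r (fun _ => (0 : X →L[ℝ] ℝ)) := by
  have : (fun _ : ℕ => ‖(0 : X →L[ℝ] ℝ)‖ ^ r) = fun _ => (0:ℝ) := by
    funext k; simp [Real.zero_rpow h0.ne']
  rw [MemLr, this]
  exact summable_zero

lemma lrNorm_zero (h0 : 0 < r) : lrNorm r (fun _ => (0 : X →L[ℝ] ℝ)) = 0 := by
  have : (fun _ : ℕ => ‖(0 : X →L[ℝ] ℝ)‖ ^ r) = fun _ => (0:ℝ) := by
    funext k; simp [Real.zero_rpow h0.ne']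
  rw [lrNorm, this, tsum_zero, Real.zero_rpow (by positivity : (1/r) ≠ 0)]

lemma lrSubNonempty (h0 : 0 < r) :
    Nonempty {xs : ℕ → X →L[ℝ] ℝ // MemLr r xs ∧ lrNorm r xs ≤ 1} :=
  ⟨⟨fun _ => 0, memLr_zero h0, by rw [lrNorm_zero h0]; norm_num⟩⟩

lemma anisoNorm_nonneg (x : ℕ → X) : 0 ≤ anisoNorm s q r x :=
  Real.iSup_nonneg fun xs => Real.rpow_nonneg
    (tsum_nonneg fun j => Real.rpow_nonneg
      (tsum_nonneg fun k => Real.rpow_nonneg (abs_nonneg _) _) _) _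

end AnisoAux
namespace AnisoAux

section Ext

variable (p : ℝ≥0∞) [Fact (1 ≤ p)] (G : Type*) [NormedAddCommGroup G] [NormedSpace ℝ G]

/-- Extension by zero of a finite vector to a sequence. -/
def extFun (N : ℕ) (v : Fin N → G) : ℕ → G := fun k => if hk : k < N then v ⟨k, hk⟩ else 0

lemma extFun_mem (hpt : 0 < p.toReal) (N : ℕ) (v : Fin N → G) : Memℓp (extFun G N v) p := by
  apply memℓp_gen
  apply summable_of_ne_finset_zero (s := Finset.range N)
  intro k hk
  have hk' : ¬ k < N := by simpa using hk
  simp [extFun, hk', Real.zero_rpow hpt.ne']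

/-- Extension by zero as a linear map into `lp`. -/
def extL (hpt : 0 < p.toReal) (N : ℕ) : (Fin N → G) →ₗ[ℝ] lp (fun _ : ℕ => G) p where
  toFun v := ⟨extFun G N v, extFun_mem p G hpt N v⟩
  map_add' v w := by
    apply lp.ext
    rw [lp.coeFn_add]
    funext k
    show extFun G N (v + w) k = extFun G N v k + extFun G N w k
    simp only [extFun]
    split_ifs with h <;> simp
  map_smul' c v := by
    apply lp.ext
    rw [lp.coeFn_smul]
    funext k
    show extFun G N (c • v) k = c • extFun G N v k
    simp only [extFun]
    split_ifs with h <;> simp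

lemma extL_norm (hpt : 0 < p.toReal) (N : ℕ) (v : Fin N → G) :
    ‖extL p G hpt N v‖ = (∑ i : Fin N, ‖v i‖ ^ p.toReal) ^ (1 / p.toReal) := by
  rw [lp.norm_eq_tsum_rpow hpt]
  congr 1
  rw [tsum_eq_sum (s := Finset.range N) (f := fun k => ‖(extL p G hpt N v : ∀ _ : ℕ, G) k‖ ^ p.toReal)
    (by
      intro k hk
      have hk' : ¬ k < N := by simpa using hk
      show ‖extFun G N v k‖ ^ p.toReal = 0
      simp [extFun, hk', Real.zero_rpow hpt.ne'])]
  rw [← Fin.sum_univ_eq_sum_range (fun k => ‖(extL p G hpt N v : ∀ _ : ℕ, G) k‖ ^ p.toReal) N]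
  apply Finset.sum_congr rfl
  intro i _
  show ‖extFun G N v i‖ ^ p.toReal = ‖v i‖ ^ p.toReal
  simp [extFun, i.isLt]

end Ext

end AnisoAux
namespace AnisoAux

variable {s q r : ℝ} {X : Type*} [NormedAddCommGroup X] [NormedSpace ℝ X]

set_option maxHeartbeats 1000000 in
lemma exists_uniform_bound (hq : 1 ≤ q) (hqs : q < s) (hr : 1 ≤ r) (hrs : r ≤ s)
    {x : ℕ → X} (hx : AnisoSummable s q r x) :
    ∃ C : ℝ, 0 ≤ C ∧ ∀ xs : ℕ → X →L[ℝ] ℝ, MemLr r xs → lrNorm r xs ≤ 1 →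
      (∑' j, (∑' k, |xs k (x j)| ^ s) ^ (q / s)) ^ (1 / q) ≤ C := by
  have hq0 : 0 < q := lt_of_lt_of_le one_pos hq
  have hs0 : 0 < s := hq0.trans hqs
  have hr0 : 0 < r := lt_of_lt_of_le one_pos hr
  have hqs0 : 0 < q / s := div_pos hq0 hs0
  set p : ℝ≥0∞ := ENNReal.ofReal r with hpdef
  set qE : ℝ≥0∞ := ENNReal.ofReal q with hqdef
  set sE : ℝ≥0∞ := ENNReal.ofReal s with hsdef
  haveI : Fact (1 ≤ p) := ⟨ENNReal.one_le_ofReal.2 hr⟩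
  haveI : Fact (1 ≤ qE) := ⟨ENNReal.one_le_ofReal.2 hq⟩
  haveI : Fact (1 ≤ sE) := ⟨ENNReal.one_le_ofReal.2 (by linarith)⟩
  have hpt : p.toReal = r := ENNReal.toReal_ofReal hr0.le
  have hqt : qE.toReal = q := ENNReal.toReal_ofReal hq0.le
  have hst : sE.toReal = s := ENNReal.toReal_ofReal hs0.le
  have hpt0 : 0 < p.toReal := by rw [hpt]; exact hr0
  have hqt0 : 0 < qE.toReal := by rw [hqt]; exact hq0
  have hst0 : 0 < sE.toReal := by rw [hst]; exact hs0
  have hpne : p ≠ 0 := by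
    simp only [hpdef, ne_eq, ENNReal.ofReal_eq_zero, not_le]
    exact hr0
  -- evaluation continuous linear maps on lp
  let ev : ℕ → lp (fun _ : ℕ => X →L[ℝ] ℝ) p →L[ℝ] (X →L[ℝ] ℝ) := fun k =>
    LinearMap.mkContinuous
      { toFun := fun f => f k
        map_add' := fun f g => congrFun (lp.coeFn_add f g) k
        map_smul' := fun c f => congrFun (lp.coeFn_smul c f) k }
      1 fun f => by simpa using lp.norm_apply_le_norm hpne f k
  -- finite truncation maps
  let Φ : ∀ _ : ℕ × ℕ, lp (fun _ : ℕ => X →L[ℝ] ℝ) p →L[ℝ] (Fin _ → Fin _ → ℝ) := fun NM =>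
    ContinuousLinearMap.pi fun j : Fin NM.1 => ContinuousLinearMap.pi fun k : Fin NM.2 =>
      (ContinuousLinearMap.apply ℝ ℝ (x j.1)).comp (ev k.1)
  let Ψ : ∀ NM : ℕ × ℕ, (Fin NM.1 → Fin NM.2 → ℝ) →ₗ[ℝ]
      lp (fun _ : ℕ => lp (fun _ : ℕ => ℝ) sE) qE := fun NM =>
    (extL qE _ hqt0 NM.1).comp
      (LinearMap.pi fun j : Fin NM.1 => (extL sE ℝ hst0 NM.2).comp (LinearMap.proj j))
  let S : ℕ × ℕ → lp (fun _ : ℕ => X →L[ℝ] ℝ) p →L[ℝ]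
      lp (fun _ : ℕ => lp (fun _ : ℕ => ℝ) sE) qE := fun NM =>
    (LinearMap.toContinuousLinearMap (Ψ NM)).comp (Φ NM)
  have hSnorm : ∀ (N M : ℕ) (f : lp (fun _ : ℕ => X →L[ℝ] ℝ) p), ‖S (N, M) f‖ =
      (∑ j ∈ Finset.range N, (∑ k ∈ Finset.range M, |f k (x j)| ^ s) ^ (q / s)) ^ (1 / q) := by
    intro N M f
    have h1 : S (N, M) f =
        extL qE _ hqt0 N fun j : Fin N => extL sE ℝ hst0 M fun k : Fin M => f k.1 (x j.1) := rfl
    rw [h1, extL_norm, hqt]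
    congr 1
    rw [← Fin.sum_univ_eq_sum_range
      (fun j => (∑ k ∈ Finset.range M, |f k (x j)| ^ s) ^ (q / s)) N]
    apply Finset.sum_congr rfl
    intro j _
    rw [extL_norm, hst]
    rw [← Real.rpow_mul (by positivity)]
    rw [show (1 / s) * q = q / s by rw [div_mul_eq_mul_div, one_mul]]
    congr 1
    rw [← Fin.sum_univ_eq_sum_range (fun k => |f k (x j.1)| ^ s) M]
    apply Finset.sum_congr rfl
    intro k _
    rw [Real.norm_eq_abs]
  -- pointwise boundedness
  have hpoint : ∀ f : lp (fun _ : ℕ => X →L[ℝ] ℝ) p, ∃ C0, ∀ NM, ‖S NM f‖ ≤ C0 := by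
    intro f
    have hmem : MemLr r (fun k => f k) := by
      have h2 := (memℓp_gen_iff hpt0).1 (lp.memℓp f)
      rwa [hpt] at h2
    obtain ⟨hin, hout⟩ := hx (fun k => f k) hmem
    refine ⟨(∑' j, (∑' k, |f k (x j)| ^ s) ^ (q / s)) ^ (1 / q), ?_⟩
    rintro ⟨N, M⟩
    rw [hSnorm N M f]
    apply Real.rpow_le_rpow (by positivity) ?_ (by positivity)
    calc ∑ j ∈ Finset.range N, (∑ k ∈ Finset.range M, |f k (x j)| ^ s) ^ (q / s)
        ≤ ∑ j ∈ Finset.range N, (∑' k, |f k (x j)| ^ s) ^ (q / s) :=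
          Finset.sum_le_sum fun j _ => Real.rpow_le_rpow (by positivity)
            (Summable.sum_le_tsum _ (fun k _ => by positivity) (hin j)) hqs0.le
      _ ≤ ∑' j, (∑' k, |f k (x j)| ^ s) ^ (q / s) :=
          Summable.sum_le_tsum _ (fun j _ => Real.rpow_nonneg
            (tsum_nonneg fun k => Real.rpow_nonneg (abs_nonneg _) _) _) hout
  obtain ⟨C', hC'⟩ := banach_steinhaus hpoint
  refine ⟨max C' 0, le_max_right _ _, ?_⟩
  intro xs hmem hle
  have hmemlp : Memℓp xs p := memℓp_gen (by rw [hpt]; exact hmem)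
  let f : lp (fun _ : ℕ => X →L[ℝ] ℝ) p := ⟨xs, hmemlp⟩
  have hfnorm : ‖f‖ ≤ 1 := by
    rw [lp.norm_eq_tsum_rpow hpt0, hpt]
    exact hle
  have hSfle : ∀ NM, ‖S NM f‖ ≤ max C' 0 := by
    intro NM
    refine le_trans (le_trans ((S NM).le_opNorm f) ?_) (le_max_left _ _)
    calc ‖S NM‖ * ‖f‖ ≤ C' * 1 :=
          mul_le_mul (hC' NM) hfnorm (norm_nonneg _) ((norm_nonneg _).trans (hC' NM))
      _ = C' := mul_one _
  obtain ⟨hin, hout⟩ := hx xs hmem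
  have htsum : ∑' j, (∑' k, |xs k (x j)| ^ s) ^ (q / s) ≤ (max C' 0) ^ q := by
    apply Summable.tsum_le_of_sum_le hout
    intro t
    obtain ⟨N, hN⟩ := t.exists_nat_subset_range
    refine le_trans (Finset.sum_le_sum_of_subset_of_nonneg hN fun j _ _ => Real.rpow_nonneg
      (tsum_nonneg fun k => Real.rpow_nonneg (abs_nonneg _) _) _) ?_
    have htend : Filter.Tendsto (fun M => ∑ j ∈ Finset.range N,
        (∑ k ∈ Finset.range M, |xs k (x j)| ^ s) ^ (q / s)) Filter.atTop
        (nhds (∑ j ∈ Finset.range N, (∑' k, |xs k (x j)| ^ s) ^ (q / s))) := by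
      apply tendsto_finset_sum
      intro j _
      exact ((hin j).hasSum.tendsto_sum_nat).rpow_const (Or.inr hqs0.le)
    apply le_of_tendsto htend
    apply Filter.Eventually.of_forall
    intro M
    have h5 : ((∑ j ∈ Finset.range N, (∑ k ∈ Finset.range M, |xs k (x j)| ^ s) ^ (q / s)) : ℝ)
        = ‖S (N, M) f‖ ^ q := by
      rw [hSnorm N M f, ← Real.rpow_mul (by positivity), one_div, inv_mul_cancel₀ hq0.ne',
        Real.rpow_one]
    rw [h5]
    exact Real.rpow_le_rpow (norm_nonneg _) (hSfle (N, M)) hq0.le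
  have hfin := Real.rpow_le_rpow (tsum_nonneg fun j => Real.rpow_nonneg
    (tsum_nonneg fun k => Real.rpow_nonneg (abs_nonneg _) _) _) htsum
    (by positivity : (0:ℝ) ≤ 1 / q)
  rwa [← Real.rpow_mul (le_max_right C' 0), mul_one_div, div_self hq0.ne',
    Real.rpow_one] at hfin

end AnisoAux
namespace AnisoAux

section Single

variable {s q r : ℝ} {X : Type*} [NormedAddCommGroup X] [NormedSpace ℝ X]

lemma abs_apply_rpow_le (hs0 : 0 < s) (g : X →L[ℝ] ℝ) (a : X) :
    |g a| ^ s ≤ ‖g‖ ^ s * ‖a‖ ^ s := by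
  rw [← Real.mul_rpow (norm_nonneg _) (norm_nonneg _)]
  exact Real.rpow_le_rpow (abs_nonneg _)
    (by rw [← Real.norm_eq_abs]; exact g.le_opNorm a) hs0.le

lemma summable_abs_apply (hq : 1 ≤ q) (hqs : q < s) (hr : 1 ≤ r) (hrs : r ≤ s)
    {xs : ℕ → X →L[ℝ] ℝ} (hmem : MemLr r xs) (a : X) :
    Summable fun k => |xs k a| ^ s := by
  have hq0 : 0 < q := lt_of_lt_of_le one_pos hq
  have hs0 : 0 < s := hq0.trans hqs
  have hr0 : 0 < r := lt_of_lt_of_le one_pos hr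
  exact Summable.of_nonneg_of_le (fun k => Real.rpow_nonneg (abs_nonneg _) _)
    (fun k => abs_apply_rpow_le hs0 (xs k) a)
    ((memLr_summable_s hr0 hrs hmem).mul_right _)

lemma aniso_single (hq : 1 ≤ q) (hqs : q < s) (hr : 1 ≤ r) (hrs : r ≤ s) (a : X) :
    AnisoSummable s q r (fun j => if j = 0 then a else 0) := by
  have hq0 : 0 < q := lt_of_lt_of_le one_pos hq
  have hs0 : 0 < s := hq0.trans hqs
  intro xs hmem
  constructor
  · intro j
    by_cases hj : j = 0
    · simpa [hj] using summable_abs_apply hq hqs hr hrs hmem a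
    · have h0 : (fun k => |xs k (if j = 0 then a else 0)| ^ s) = fun _ => (0:ℝ) := by
        funext k; simp [hj, Real.zero_rpow hs0.ne']
      rw [h0]; exact summable_zero
  · apply summable_of_ne_finset_zero (s := ({0} : Finset ℕ))
    intro j hj
    have hj0 : j ≠ 0 := by simpa using hj
    have h0 : (fun k => |xs k (if j = 0 then a else 0)| ^ s) = fun _ => (0:ℝ) := by
      funext k; simp [hj0, Real.zero_rpow hs0.ne']
    rw [h0, tsum_zero, Real.zero_rpow (div_pos hq0 hs0).ne']

lemma term_single_eq (hq : 1 ≤ q) (hqs : q < s) (a : X) (xs : ℕ → X →L[ℝ] ℝ) :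
    (∑' j, (∑' k, |xs k (if j = 0 then a else 0)| ^ s) ^ (q / s)) ^ (1 / q)
      = (∑' k, |xs k a| ^ s) ^ (1 / s) := by
  have hq0 : 0 < q := lt_of_lt_of_le one_pos hq
  have hs0 : 0 < s := hq0.trans hqs
  have h1 : (∑' j, (∑' k, |xs k (if j = 0 then a else 0)| ^ s) ^ (q / s))
      = (∑' k, |xs k a| ^ s) ^ (q / s) := by
    rw [tsum_eq_single 0]
    · simp
    · intro j hj
      have h0 : (fun k => |xs k (if j = 0 then a else 0)| ^ s) = fun _ => (0:ℝ) := by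
        funext k; simp [hj, Real.zero_rpow hs0.ne']
      rw [h0, tsum_zero, Real.zero_rpow (div_pos hq0 hs0).ne']
  rw [h1, ← Real.rpow_mul (tsum_nonneg fun k => Real.rpow_nonneg (abs_nonneg _) _)]
  congr 1
  field_simp

lemma term_single_le (hq : 1 ≤ q) (hqs : q < s) (hr : 1 ≤ r) (hrs : r ≤ s) (a : X)
    {xs : ℕ → X →L[ℝ] ℝ} (hmem : MemLr r xs) (hle : lrNorm r xs ≤ 1) :
    (∑' k, |xs k a| ^ s) ^ (1 / s) ≤ ‖a‖ := by
  have hq0 : 0 < q := lt_of_lt_of_le one_pos hq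
  have hs0 : 0 < s := hq0.trans hqs
  have hr0 : 0 < r := lt_of_lt_of_le one_pos hr
  have h1 : ∑' k, |xs k a| ^ s ≤ ‖a‖ ^ s := by
    calc ∑' k, |xs k a| ^ s ≤ ∑' k, ‖xs k‖ ^ s * ‖a‖ ^ s :=
          Summable.tsum_le_tsum (fun k => abs_apply_rpow_le hs0 (xs k) a)
            (summable_abs_apply hq hqs hr hrs hmem a)
            ((memLr_summable_s hr0 hrs hmem).mul_right _)
      _ = (∑' k, ‖xs k‖ ^ s) * ‖a‖ ^ s := tsum_mul_right
      _ ≤ 1 * ‖a‖ ^ s := by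
          apply mul_le_mul_of_nonneg_right (tsum_s_le_one hr0 hrs hmem hle)
            (Real.rpow_nonneg (norm_nonneg _) _)
      _ = ‖a‖ ^ s := one_mul _
  calc (∑' k, |xs k a| ^ s) ^ (1 / s)
      ≤ (‖a‖ ^ s) ^ (1 / s) := Real.rpow_le_rpow
        (tsum_nonneg fun k => Real.rpow_nonneg (abs_nonneg _) _) h1 (by positivity)
    _ = ‖a‖ := by
        rw [← Real.rpow_mul (norm_nonneg _), mul_one_div, div_self hs0.ne', Real.rpow_one]

lemma anisoNorm_single (hq : 1 ≤ q) (hqs : q < s) (hr : 1 ≤ r) (hrs : r ≤ s) (a : X) :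
    anisoNorm s q r (fun j => if j = 0 then a else 0) = ‖a‖ := by
  have hq0 : 0 < q := lt_of_lt_of_le one_pos hq
  have hs0 : 0 < s := hq0.trans hqs
  have hr0 : 0 < r := lt_of_lt_of_le one_pos hr
  haveI := lrSubNonempty (X := X) hr0
  apply le_antisymm
  · apply ciSup_le
    rintro ⟨xs, hmem, hle⟩
    rw [term_single_eq hq hqs]
    exact term_single_le hq hqs hr hrs a hmem hle
  · by_cases ha : a = 0
    · subst ha
      simpa using anisoNorm_nonneg (s := s) (q := q) (r := r)
        (fun j : ℕ => if j = 0 then (0:X) else 0)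
    · obtain ⟨g, hg1, hga⟩ := exists_dual_vector ℝ a (norm_ne_zero_iff.2 ha)
      set xs : ℕ → X →L[ℝ] ℝ := fun k => if k = 0 then g else 0 with hxs
      have hmem : MemLr r xs := by
        apply summable_of_ne_finset_zero (s := ({0} : Finset ℕ))
        intro k hk
        have hk0 : k ≠ 0 := by simpa using hk
        simp [hxs, hk0, Real.zero_rpow hr0.ne']
      have hle : lrNorm r xs ≤ 1 := by
        rw [lrNorm, tsum_eq_single 0]
        · simp [hxs, hg1, Real.one_rpow]
        · intro k hk
          simp [hxs, hk, Real.zero_rpow hr0.ne']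
      have hbdd : BddAbove (Set.range fun xs' :
          {xs' : ℕ → X →L[ℝ] ℝ // MemLr r xs' ∧ lrNorm r xs' ≤ 1} =>
          (∑' j, (∑' k, |xs'.1 k (if j = 0 then a else 0)| ^ s) ^ (q / s)) ^ (1 / q)) := by
        refine ⟨‖a‖, ?_⟩
        rintro _ ⟨⟨xs', hmem', hle'⟩, rfl⟩
        dsimp only
        rw [term_single_eq hq hqs]
        exact term_single_le hq hqs hr hrs a hmem' hle'
      have hval : (∑' j, (∑' k, |xs k (if j = 0 then a else 0)| ^ s) ^ (q / s)) ^ (1 / q)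
          = ‖a‖ := by
        rw [term_single_eq hq hqs]
        have h2 : (∑' k, |xs k a| ^ s) = |g a| ^ s := by
          rw [tsum_eq_single 0]
          · simp [hxs]
          · intro k hk
            simp [hxs, hk, Real.zero_rpow hs0.ne']
        rw [h2, ← Real.rpow_mul (abs_nonneg _), mul_one_div, div_self hs0.ne',
          Real.rpow_one, hga]
        simp
      calc ‖a‖ = _ := hval.symm
        _ ≤ anisoNorm s q r (fun j => if j = 0 then a else 0) :=
          le_ciSup hbdd (⟨xs, hmem, hle⟩ :
            {xs' : ℕ → X →L[ℝ] ℝ // MemLr r xs' ∧ lrNorm r xs' ≤ 1})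

end Single

end AnisoAux
theorem stmt14 {U X : Type*} [NormedAddCommGroup U] [NormedSpace ℝ U] [CompleteSpace U]
    [NormedAddCommGroup X] [NormedSpace ℝ X] [CompleteSpace X]
    {s q r : ℝ} (hq : 1 ≤ q) (hqs : q < s) (hr : 1 ≤ r) (hrs : r ≤ s)
    (u : U →L[ℝ] X) :
    (∀ x : ℕ → U, AnisoSummable s q r x → AnisoSummable s q r fun j => u (x j)) ∧
      (⨆ x : {x : ℕ → U // AnisoSummable s q r x ∧ anisoNorm s q r x ≤ 1},
        anisoNorm s q r fun j => u (x.1 j)) = ‖u‖ := by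
  classical
  have hq0 : 0 < q := lt_of_lt_of_le one_pos hq
  have hs0 : 0 < s := hq0.trans hqs
  have hr0 : 0 < r := lt_of_lt_of_le one_pos hr
  have hqs0 : 0 < q / s := div_pos hq0 hs0
  haveI instU := AnisoAux.lrSubNonempty (X := U) hr0
  haveI instX := AnisoAux.lrSubNonempty (X := X) hr0
  have hmap : ∀ x : ℕ → U, AnisoSummable s q r x → AnisoSummable s q r fun j => u (x j) := by
    intro x hx xs hmem
    have hys : MemLr r (fun k => (xs k).comp u) := by
      apply Summable.of_nonneg_of_le (fun k => Real.rpow_nonneg (norm_nonneg _) _)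
        (fun k => ?_) (hmem.mul_right (‖u‖ ^ r))
      calc ‖(xs k).comp u‖ ^ r ≤ (‖xs k‖ * ‖u‖) ^ r :=
            Real.rpow_le_rpow (norm_nonneg _) ((xs k).opNorm_comp_le u) hr0.le
        _ = ‖xs k‖ ^ r * ‖u‖ ^ r := Real.mul_rpow (norm_nonneg _) (norm_nonneg _)
    exact hx (fun k => (xs k).comp u) hys
  refine ⟨hmap, ?_⟩
  have hbound : ∀ x : ℕ → U, AnisoSummable s q r x → anisoNorm s q r x ≤ 1 →
      anisoNorm s q r (fun j => u (x j)) ≤ ‖u‖ := by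
    intro x hx hxle
    apply ciSup_le
    rintro ⟨xs, hmem, hle⟩
    dsimp only
    by_cases hu : u = 0
    · subst hu
      simp only [ContinuousLinearMap.zero_apply, map_zero, abs_zero,
        Real.zero_rpow hs0.ne', tsum_zero, Real.zero_rpow hqs0.ne', tsum_zero,
        Real.zero_rpow (one_div_ne_zero hq0.ne'), norm_zero, le_refl]
    · have hu0 : 0 < ‖u‖ := norm_pos_iff.2 hu
      set zs : ℕ → U →L[ℝ] ℝ := fun k => ‖u‖⁻¹ • ((xs k).comp u) with hzs
      have hzn : ∀ k, ‖zs k‖ ≤ ‖xs k‖ := by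
        intro k
        calc ‖zs k‖ ≤ ‖u‖⁻¹ * ‖(xs k).comp u‖ := by
              show ‖‖u‖⁻¹ • (xs k).comp u‖ ≤ _
              simpa [Real.norm_eq_abs, abs_of_nonneg (inv_nonneg.2 (norm_nonneg u))] using
                norm_smul_le (‖u‖⁻¹) ((xs k).comp u)
          _ ≤ ‖u‖⁻¹ * (‖xs k‖ * ‖u‖) :=
              mul_le_mul_of_nonneg_left ((xs k).opNorm_comp_le u)
                (inv_nonneg.2 (norm_nonneg _))
          _ = ‖xs k‖ := by
              rw [mul_comm (‖xs k‖), ← mul_assoc, inv_mul_cancel₀ hu0.ne', one_mul]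
      have hzmem : MemLr r zs :=
        Summable.of_nonneg_of_le (fun k => Real.rpow_nonneg (norm_nonneg _) _)
          (fun k => Real.rpow_le_rpow (norm_nonneg _) (hzn k) hr0.le) hmem
      have hzle : lrNorm r zs ≤ 1 := by
        refine le_trans ?_ hle
        exact Real.rpow_le_rpow (tsum_nonneg fun k => Real.rpow_nonneg (norm_nonneg _) _)
          (Summable.tsum_le_tsum (fun k => Real.rpow_le_rpow (norm_nonneg _) (hzn k) hr0.le) hzmem hmem)
          (by positivity)
      have happ : ∀ j k, |xs k (u (x j))| = ‖u‖ * |zs k (x j)| := by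
        intro j k
        have h1 : zs k (x j) = ‖u‖⁻¹ * xs k (u (x j)) := rfl
        rw [h1, abs_mul, abs_of_nonneg (inv_nonneg.2 (norm_nonneg u)), ← mul_assoc,
          mul_inv_cancel₀ hu0.ne', one_mul]
      have h2 : ∀ j, (∑' k, |xs k (u (x j))| ^ s) ^ (q / s)
          = ‖u‖ ^ q * (∑' k, |zs k (x j)| ^ s) ^ (q / s) := by
        intro j
        have h3 : (∑' k, |xs k (u (x j))| ^ s) = ‖u‖ ^ s * ∑' k, |zs k (x j)| ^ s := by
          rw [← tsum_mul_left]
          congr 1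
          funext k
          rw [happ j k, Real.mul_rpow (norm_nonneg _) (abs_nonneg _)]
        rw [h3, Real.mul_rpow (Real.rpow_nonneg (norm_nonneg _) _)
          (tsum_nonneg fun k => Real.rpow_nonneg (abs_nonneg _) _),
          ← Real.rpow_mul (norm_nonneg _), mul_comm s (q / s), div_mul_cancel₀ q hs0.ne']
      calc (∑' j, (∑' k, |xs k (u (x j))| ^ s) ^ (q / s)) ^ (1 / q)
          = (‖u‖ ^ q * ∑' j, (∑' k, |zs k (x j)| ^ s) ^ (q / s)) ^ (1 / q) := by
            rw [← tsum_mul_left]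
            exact congrArg (fun t => t ^ (1/q)) (tsum_congr h2)
        _ = ‖u‖ * (∑' j, (∑' k, |zs k (x j)| ^ s) ^ (q / s)) ^ (1 / q) := by
            rw [Real.mul_rpow (Real.rpow_nonneg (norm_nonneg _) _) (tsum_nonneg fun j =>
              Real.rpow_nonneg (tsum_nonneg fun k => Real.rpow_nonneg (abs_nonneg _) _) _),
              ← Real.rpow_mul (norm_nonneg _), mul_one_div, div_self hq0.ne', Real.rpow_one]
        _ ≤ ‖u‖ * 1 := by
            apply mul_le_mul_of_nonneg_left ?_ (norm_nonneg u)
            obtain ⟨C, hC0, hC⟩ := AnisoAux.exists_uniform_bound hq hqs hr hrs hx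
            have hbdd : BddAbove (Set.range fun xs' :
                {xs' : ℕ → U →L[ℝ] ℝ // MemLr r xs' ∧ lrNorm r xs' ≤ 1} =>
                (∑' j, (∑' k, |xs'.1 k (x j)| ^ s) ^ (q / s)) ^ (1 / q)) := by
              refine ⟨C, ?_⟩
              rintro _ ⟨⟨xs', hmem', hle'⟩, rfl⟩
              exact hC xs' hmem' hle'
            exact le_trans (le_ciSup hbdd
              (⟨zs, hzmem, hzle⟩ : {xs' : ℕ → U →L[ℝ] ℝ // MemLr r xs' ∧ lrNorm r xs' ≤ 1}))
              hxle
        _ = ‖u‖ := mul_one _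
  haveI : Nonempty {x : ℕ → U // AnisoSummable s q r x ∧ anisoNorm s q r x ≤ 1} := by
    refine ⟨⟨fun j => if j = 0 then (0:U) else 0,
      AnisoAux.aniso_single hq hqs hr hrs 0, ?_⟩⟩
    rw [AnisoAux.anisoNorm_single hq hqs hr hrs]
    simp
  apply le_antisymm
  · apply ciSup_le
    rintro ⟨x, hx, hxle⟩
    exact hbound x hx hxle
  · have hbddS : BddAbove (Set.range fun x : {x : ℕ → U // AnisoSummable s q r x ∧
        anisoNorm s q r x ≤ 1} => anisoNorm s q r fun j => u (x.1 j)) := by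
      refine ⟨‖u‖, ?_⟩
      rintro _ ⟨⟨x, hx, hxle⟩, rfl⟩
      exact hbound x hx hxle
    have hS0 : 0 ≤ ⨆ x : {x : ℕ → U // AnisoSummable s q r x ∧ anisoNorm s q r x ≤ 1},
        anisoNorm s q r fun j => u (x.1 j) :=
      Real.iSup_nonneg fun x => AnisoAux.anisoNorm_nonneg _
    apply ContinuousLinearMap.opNorm_le_bound u hS0
    intro a
    by_cases ha : a = 0
    · simp [ha]
    · set b : U := ‖a‖⁻¹ • a with hb
      have hbn : ‖b‖ = 1 := norm_smul_inv_norm ha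
      have hxel : AnisoSummable s q r (fun j => if j = 0 then b else 0) :=
        AnisoAux.aniso_single hq hqs hr hrs b
      have hxle : anisoNorm s q r (fun j => if j = 0 then b else 0) ≤ 1 := by
        rw [AnisoAux.anisoNorm_single hq hqs hr hrs, hbn]
      have hcongr : (fun j => u ((fun j' => if j' = 0 then b else 0) j))
          = fun j => if j = 0 then u b else 0 := by
        funext j
        by_cases hj : j = 0 <;> simp [hj]
      have hub : ‖u b‖ ≤ ⨆ x : {x : ℕ → U // AnisoSummable s q r x ∧ anisoNorm s q r x ≤ 1},
          anisoNorm s q r fun j => u (x.1 j) := by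
        have h1 : anisoNorm s q r (fun j => u ((fun j' : ℕ => if j' = 0 then b else 0) j))
            = ‖u b‖ := by
          rw [hcongr, AnisoAux.anisoNorm_single hq hqs hr hrs]
        calc ‖u b‖ = _ := h1.symm
          _ ≤ _ := le_ciSup hbddS (⟨fun j => if j = 0 then b else 0, hxel, hxle⟩ :
              {x : ℕ → U // AnisoSummable s q r x ∧ anisoNorm s q r x ≤ 1})
      have h2 : u a = ‖a‖ • u b := by
        rw [hb, map_smul, smul_smul, mul_inv_cancel₀ (norm_ne_zero_iff.2 ha), one_smul]
      calc ‖u a‖ = ‖a‖ * ‖u b‖ := by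
            rw [h2, norm_smul, Real.norm_eq_abs, abs_of_nonneg (norm_nonneg a)]
        _ ≤ ‖a‖ * ⨆ x : {x : ℕ → U // AnisoSummable s q r x ∧ anisoNorm s q r x ≤ 1},
              anisoNorm s q r fun j => u (x.1 j) :=
            mul_le_mul_of_nonneg_left hub (norm_nonneg a)
        _ = (⨆ x : {x : ℕ → U // AnisoSummable s q r x ∧ anisoNorm s q r x ≤ 1},
              anisoNorm s q r fun j => u (x.1 j)) * ‖a‖ := mul_comm _ _
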